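/- Let A be a real symmetric n×n matrix, let B be a real symmetric c×c matrix, let u, v be indices for A and a, b indices for B, and suppose that (exp(itA))_{u,v} = (exp(itB))_{a,b} for every real t. Then there is pretty good state transfer from u to v relative to A if and only if there is pretty good state transfer from a to b relative to B. -/

import Mathlib

open Matrix

noncomputable section

/-- The continuous quantum walk `U(t) = exp(itA)`. -/
def qWalk {n : Type*} [Fintype n] [DecidableEq n] (A : Matrix n n ℂ) (t : ℝ) :
    Matrix n n ℂ :=
  NormedSpace.exp ((Complex.I * (t : ℂ)) • A)

/-- Pretty good state transfer from `a` to `b` for the quantum walk of `A`. -/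
def IsPGST {n : Type*} [Fintype n] [DecidableEq n] (A : Matrix n n ℂ) (a b : n) : Prop :=
  ∃ γ : ℂ, ‖γ‖ = 1 ∧ ∀ ε : ℝ, 0 < ε → ∃ t : ℝ,
    ‖(qWalk A t).mulVec (Pi.single a 1) - γ • (Pi.single b 1 : n → ℂ)‖ < ε

namespace PGSTaux

variable {n : Type*} [Fintype n] [DecidableEq n]

lemma qWalk_isSymm {M : Matrix n n ℂ} (hS : M.IsSymm) (t : ℝ) : (qWalk M t).IsSymm :=
  Matrix.IsSymm.exp (hS.smul _)

lemma qWalk_unitary {M : Matrix n n ℂ} (hH : M.IsHermitian) (t : ℝ) :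
    (qWalk M t)ᴴ * qWalk M t = 1 := by
  set X : Matrix n n ℂ := (Complex.I * (t : ℂ)) • M with hXdef
  have hX : Xᴴ = -X := by
    rw [hXdef, conjTranspose_smul, hH.eq]
    simp [Complex.conj_ofReal, neg_smul]
  have hcomm : Commute (-X) X := (Commute.refl X).neg_left
  calc (qWalk M t)ᴴ * qWalk M t
      = NormedSpace.exp Xᴴ * NormedSpace.exp X := by
        rw [Matrix.exp_conjTranspose]; rfl
    _ = NormedSpace.exp (-X) * NormedSpace.exp X := by rw [hX]
    _ = NormedSpace.exp (-X + X) := (Matrix.exp_add_of_commute _ _ hcomm).symm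
    _ = 1 := by rw [neg_add_cancel, NormedSpace.exp_zero]

lemma col_normSq_sum {W : Matrix n n ℂ} (hW : Wᴴ * W = 1) (u : n) :
    ∑ j, Complex.normSq (W j u) = 1 := by
  have h1 : (Wᴴ * W) u u = 1 := by rw [hW, Matrix.one_apply_eq]
  have h2 : ∑ j, (starRingEnd ℂ) (W j u) * W j u = 1 := by
    simpa [Matrix.mul_apply, conjTranspose_apply] using h1
  have h3 : ((∑ j, Complex.normSq (W j u) : ℝ) : ℂ) = 1 := by
    push_cast
    rw [← h2]
    exact Finset.sum_congr rfl fun j _ => Complex.normSq_eq_conj_mul_self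
  exact_mod_cast h3

lemma isPGST_iff_entry (M : Matrix n n ℂ) (hH : M.IsHermitian) (hS : M.IsSymm) (u v : n) :
    IsPGST M u v ↔ ∃ γ : ℂ, ‖γ‖ = 1 ∧ ∀ ε : ℝ, 0 < ε → ∃ t : ℝ,
      ‖qWalk M t u v - γ‖ < ε := by
  constructor
  · rintro ⟨γ, hγ, hc⟩
    refine ⟨γ, hγ, fun ε hε => ?_⟩
    obtain ⟨t, ht⟩ := hc ε hε
    refine ⟨t, ?_⟩
    have hcomp : ((qWalk M t).mulVec (Pi.single u 1) - γ • (Pi.single v 1 : n → ℂ)) v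
        = qWalk M t u v - γ := by
      simp [Matrix.mulVec_single, (qWalk_isSymm hS t).apply]
    calc ‖qWalk M t u v - γ‖
        = ‖((qWalk M t).mulVec (Pi.single u 1) - γ • (Pi.single v 1 : n → ℂ)) v‖ := by
          rw [hcomp]
      _ ≤ ‖(qWalk M t).mulVec (Pi.single u 1) - γ • (Pi.single v 1 : n → ℂ)‖ :=
          norm_le_pi_norm _ v
      _ < ε := ht
  · rintro ⟨γ, hγ, hc⟩
    refine ⟨γ, hγ, fun ε hε => ?_⟩
    set δ : ℝ := min (ε / 2) (ε ^ 2 / 4) with hδdef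
    have hδpos : 0 < δ := lt_min (by linarith) (by positivity)
    have hδ1 : δ ≤ ε / 2 := min_le_left _ _
    have hδ2 : δ ≤ ε ^ 2 / 4 := min_le_right _ _
    obtain ⟨t, ht⟩ := hc δ hδpos
    refine ⟨t, ?_⟩
    set W := qWalk M t with hWdef
    have hvu : W v u = W u v := (qWalk_isSymm hS t).apply u v
    have hsum := col_normSq_sum (qWalk_unitary hH t) u
    rw [pi_norm_lt_iff hε]
    intro i
    by_cases hiv : i = v
    · rw [hiv]
      have hcomp : (W.mulVec (Pi.single u 1) - γ • (Pi.single v 1 : n → ℂ)) v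
          = W u v - γ := by
        simp [Matrix.mulVec_single, hvu]
      rw [hcomp]
      calc ‖W u v - γ‖ < δ := ht
        _ ≤ ε / 2 := hδ1
        _ < ε := by linarith
    · have hcomp : (W.mulVec (Pi.single u 1) - γ • (Pi.single v 1 : n → ℂ)) i
          = W i u := by
        simp [Matrix.mulVec_single, Pi.single_eq_of_ne hiv]
      rw [hcomp]
      -- bound the off-target entry
      have hpair : Complex.normSq (W i u) + Complex.normSq (W v u) ≤ 1 := by
        rw [← hsum]
        have hsub : ({i, v} : Finset n) ⊆ Finset.univ := Finset.subset_univ _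
        calc Complex.normSq (W i u) + Complex.normSq (W v u)
            = ∑ j ∈ ({i, v} : Finset n), Complex.normSq (W j u) := by
              rw [Finset.sum_pair hiv]
          _ ≤ ∑ j, Complex.normSq (W j u) :=
              Finset.sum_le_sum_of_subset_of_nonneg hsub
                (fun j _ _ => Complex.normSq_nonneg _)
      set x : ℝ := ‖W i u‖ with hxdef
      set y : ℝ := ‖W v u‖ with hydef
      have hx0 : 0 ≤ x := norm_nonneg _
      have hy0 : 0 ≤ y := norm_nonneg _
      have hxsq : Complex.normSq (W i u) = x ^ 2 := (Complex.sq_norm _).symm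
      have hysq : Complex.normSq (W v u) = y ^ 2 := (Complex.sq_norm _).symm
      rw [hxsq, hysq] at hpair
      have hylb : 1 - δ < y := by
        have h1 : ‖γ‖ - ‖W u v‖ ≤ ‖W u v - γ‖ := by
          rw [norm_sub_rev]; exact norm_sub_norm_le γ (W u v)
        rw [hγ] at h1
        have h2 : y = ‖W u v‖ := by rw [hydef, hvu]
        rw [h2]
        linarith
      have hy1 : y ≤ 1 := by nlinarith [sq_nonneg x]
      have hx2 : x ^ 2 ≤ 2 * δ := by nlinarith
      show x < ε
      nlinarith [sq_nonneg (x - ε)]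
  
end PGSTaux

/-- if `(exp(itA))_{u,v} = (exp(itB))_{a,b}` for all real `t`, where `A`, `B`
are real symmetric, then there is pretty good state transfer from `u` to `v` relative to `A`
iff there is pretty good state transfer from `a` to `b` relative to `B`. -/
theorem pgst_iff_of_entry_eq (n c : ℕ)
    (A : Matrix (Fin n) (Fin n) ℝ) (hA : A.IsSymm)
    (B : Matrix (Fin c) (Fin c) ℝ) (hB : B.IsSymm)
    (u v : Fin n) (a b : Fin c)
    (h : ∀ t : ℝ, qWalk (A.map Complex.ofReal) t u v = qWalk (B.map Complex.ofReal) t a b) :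
    IsPGST (A.map Complex.ofReal) u v ↔ IsPGST (B.map Complex.ofReal) a b := by
  have hAH : (A.map Complex.ofReal).IsHermitian := by
    show _ᴴ = _
    ext i j
    simp [Matrix.conjTranspose_apply, Matrix.map_apply, Complex.conj_ofReal, hA.apply i j]
  have hBH : (B.map Complex.ofReal).IsHermitian := by
    show _ᴴ = _
    ext i j
    simp [Matrix.conjTranspose_apply, Matrix.map_apply, Complex.conj_ofReal, hB.apply i j]
  rw [PGSTaux.isPGST_iff_entry _ hAH (hA.map _) u v,
      PGSTaux.isPGST_iff_entry _ hBH (hB.map _) a b]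
  simp only [h]
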